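/- Fix X ∈ ℝ^{n×d}, vectors Y, μ ∈ ℝ^n, and set ε := Y − μ. Let A : ℝ → ℝ be convex, A(v) := Σ_{i=1}^n A(v_i), ℓ(θ) := (1/n)(−YᵀXθ + A(Xθ)), Risk(θ) := (1/n)(−μᵀXθ + A(Xθ)). Assume ℓ is L-smooth on ℝ^d (respectively, on the closed Euclidean ball B_d(b) of radius b > 0). Let θ_T be the T-th iterate of gradient descent θ_{t+1} = θ_t − η∇ℓ(θ_t) (respectively, of projected gradient descent θ_{t+1} = Proj_{B_d(b)}(θ_t − η∇ℓ(θ_t))), initialized at θ_0 = 0 with constant step size η ∈ (0, 1/L], and set λ_T := 1/(ηT). Then for every T ≥ 1 and every θ ∈ ℝ^d (respectively, every θ ∈ B_d(b)): Risk(θ_T) ≤ Risk(θ) + (1/(2λ_T))‖Xᵀε/n‖₂² + (λ_T/2)‖θ‖₂². -/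

import Mathlib

open Finset

/-- The GLM objective `(1/n) (−Yᵀ(Xθ) + Σ_i A((Xθ)_i))`. -/
noncomputable def glmObj {n d : ℕ} (X : Matrix (Fin n) (Fin d) ℝ) (Y : Fin n → ℝ)
    (A : ℝ → ℝ) (θ : Fin d → ℝ) : ℝ :=
  (1 / (n : ℝ)) * (-(∑ i, Y i * X.mulVec θ i) + ∑ i, A (X.mulVec θ i))

/-- The gradient of `g : ℝ^d → ℝ` in coordinates, `(∇g(x))_j = (Dg(x))(e_j)`. -/
noncomputable def piGrad {d : ℕ} (g : (Fin d → ℝ) → ℝ) (x : Fin d → ℝ) : Fin d → ℝ :=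
  fun j => fderiv ℝ g x (Pi.single j 1)

/-! ### Auxiliary dot-product / squared-norm machinery -/

noncomputable def gdot {d : ℕ} (x y : Fin d → ℝ) : ℝ := ∑ j, x j * y j
noncomputable def gnsq {d : ℕ} (x : Fin d → ℝ) : ℝ := ∑ j, x j ^ 2

lemma gnsq_nonneg {d : ℕ} (x : Fin d → ℝ) : 0 ≤ gnsq x :=
  Finset.sum_nonneg fun _ _ => sq_nonneg _

lemma gdot_le_sqrt {d : ℕ} (x y : Fin d → ℝ) :
    gdot x y ≤ Real.sqrt (gnsq x) * Real.sqrt (gnsq y) := by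
  have h1 : gdot x y ≤ |gdot x y| := le_abs_self _
  have h2 : |gdot x y| = Real.sqrt ((gdot x y) ^ 2) := by
    rw [Real.sqrt_sq_eq_abs]
  have h3 : (gdot x y) ^ 2 ≤ gnsq x * gnsq y := sum_mul_sq_le_sq_mul_sq _ _ _
  calc gdot x y ≤ Real.sqrt ((gdot x y)^2) := by rw [← h2]; exact h1
    _ ≤ Real.sqrt (gnsq x * gnsq y) := Real.sqrt_le_sqrt h3
    _ = Real.sqrt (gnsq x) * Real.sqrt (gnsq y) := Real.sqrt_mul (gnsq_nonneg x) _

lemma gdot_amgm {d : ℕ} {a : ℝ} (ha : 0 < a) (x y : Fin d → ℝ) :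
    gdot x y ≤ a / 2 * gnsq x + 1 / (2 * a) * gnsq y := by
  unfold gdot gnsq
  rw [Finset.mul_sum, Finset.mul_sum, ← Finset.sum_add_distrib]
  refine Finset.sum_le_sum fun j _ => ?_
  have key : a⁻¹ * (a * x j - y j)^2 ≥ 0 := by positivity
  calc x j * y j = a/2 * x j^2 + 1/(2*a) * y j^2 - a⁻¹/2 * (a * x j - y j)^2 := by
        field_simp; ring
    _ ≤ a / 2 * x j ^ 2 + 1 / (2 * a) * y j ^ 2 := by nlinarith

lemma gnsq_add_smul {d : ℕ} (u v : Fin d → ℝ) (s : ℝ) :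
    gnsq (u + s • v) = gnsq u + 2 * s * gdot u v + s ^ 2 * gnsq v := by
  unfold gnsq gdot
  rw [Finset.mul_sum, Finset.mul_sum, ← Finset.sum_add_distrib, ← Finset.sum_add_distrib]
  exact Finset.sum_congr rfl fun j _ => by simp [Pi.add_apply]; ring

lemma gdot_polar {d : ℕ} (x p w : Fin d → ℝ) :
    gdot (x - p) (p - w) = (gnsq (x - w) - gnsq (x - p) - gnsq (p - w)) / 2 := by
  unfold gnsq gdot
  rw [eq_div_iff (by norm_num : (2:ℝ) ≠ 0), Finset.sum_mul, ← Finset.sum_sub_distrib,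
    ← Finset.sum_sub_distrib]
  exact Finset.sum_congr rfl fun j _ => by simp [Pi.sub_apply]; ring

lemma gnsq_sub_comm {d : ℕ} (x y : Fin d → ℝ) : gnsq (x - y) = gnsq (y - x) := by
  unfold gnsq
  exact Finset.sum_congr rfl fun j _ => by simp [Pi.sub_apply]; ring

/-! ### Differentiation along lines -/

lemma clm_apply_eq {d : ℕ} (Λ : (Fin d → ℝ) →L[ℝ] ℝ) (v : Fin d → ℝ) :
    Λ v = ∑ j, v j * Λ (Pi.single j 1) := by
  have hv : v = ∑ j, v j • (Pi.single j 1 : Fin d → ℝ) := by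
    funext k
    rw [Finset.sum_apply]
    simp [Pi.single_apply]
  conv_lhs => rw [hv]
  rw [map_sum]
  simp [smul_eq_mul]

lemma hasDerivAt_line {d : ℕ} {f : (Fin d → ℝ) → ℝ} {x v : Fin d → ℝ} {t : ℝ}
    (hf : DifferentiableAt ℝ f (x + t • v)) :
    HasDerivAt (fun s : ℝ => f (x + s • v))
      (∑ j, v j * piGrad f (x + t • v) j) t := by
  have h1 : HasDerivAt (fun s : ℝ => x + s • v) v t := by
    simpa using ((hasDerivAt_id t).smul_const v).const_add x
  have h2 := hf.hasFDerivAt.comp_hasDerivAt t h1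
  have h3 : fderiv ℝ f (x + t • v) v = ∑ j, v j * piGrad f (x + t • v) j :=
    clm_apply_eq _ v
  rw [← h3]
  exact h2

/-! ### Convexity lemmas -/

lemma convexOn_comp_line {d : ℕ} {f : (Fin d → ℝ) → ℝ}
    (hf : ConvexOn ℝ Set.univ f) (x v : Fin d → ℝ) :
    ConvexOn ℝ Set.univ (fun s : ℝ => f (x + s • v)) := by
  refine ⟨convex_univ, fun s _ t _ a b ha hb hab => ?_⟩
  have key : x + (a • s + b • t) • v = a • (x + s • v) + b • (x + t • v) := by
    funext j
    simp only [Pi.add_apply, Pi.smul_apply, smul_eq_mul]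
    linear_combination (-(x j)) * hab
  simp only [key]
  simpa using hf.2 (Set.mem_univ (x + s • v)) (Set.mem_univ (x + t • v)) ha hb hab

lemma convex_deriv_le {g : ℝ → ℝ} (hg : ConvexOn ℝ Set.univ g) {D : ℝ}
    (hD : HasDerivAt g D 0) : g 0 + D ≤ g 1 := by
  have hslope : ∀ t ∈ Set.Ioc (0:ℝ) 1, slope g 0 t ≤ g 1 - g 0 := by
    intro t ht
    have h1 : g t ≤ (1 - t) * g 0 + t * g 1 := by
      have := hg.2 (Set.mem_univ (0:ℝ)) (Set.mem_univ (1:ℝ))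
        (by linarith [ht.2] : (0:ℝ) ≤ 1 - t) (le_of_lt ht.1) (by ring)
      simpa using this
    rw [slope_def_field, div_le_iff₀ (by simpa using ht.1)]
    nlinarith
  have htend : Filter.Tendsto (slope g 0) (nhdsWithin 0 (Set.Ioi 0)) (nhds D) := by
    have := hasDerivAt_iff_tendsto_slope.mp hD
    exact this.mono_left (nhdsWithin_mono 0 (fun x hx => ne_of_gt hx))
  have hmem : Set.Ioc (0:ℝ) 1 ∈ nhdsWithin (0:ℝ) (Set.Ioi 0) :=
    Ioc_mem_nhdsGT_of_mem (by constructor <;> norm_num)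
  have hle : D ≤ g 1 - g 0 :=
    le_of_tendsto htend (Filter.eventually_iff_exists_mem.mpr ⟨_, hmem, hslope⟩)
  linarith

lemma descent_scalar {g g' : ℝ → ℝ} {K : ℝ}
    (hd : ∀ t ∈ Set.Icc (0:ℝ) 1, HasDerivAt g (g' t) t)
    (hlip : ∀ t ∈ Set.Icc (0:ℝ) 1, g' t ≤ g' 0 + K * t) :
    g 1 ≤ g 0 + g' 0 + K / 2 := by
  set h : ℝ → ℝ := fun t => g 0 + g' 0 * t + K * t ^ 2 / 2 - g t with hh_def
  have hh : ∀ t ∈ Set.Icc (0:ℝ) 1, HasDerivAt h (g' 0 + K * t - g' t) t := by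
    intro t ht
    have h1 : HasDerivAt (fun t : ℝ => g 0 + g' 0 * t + K * t ^ 2 / 2)
        (g' 0 + K * t) t := by
      have ha : HasDerivAt (fun t : ℝ => g' 0 * t) (g' 0) t := by
        simpa using (hasDerivAt_id t).const_mul (g' 0)
      have hb : HasDerivAt (fun t : ℝ => K * t ^ 2 / 2) (K * t) t := by
        have := ((hasDerivAt_pow 2 t).const_mul K).div_const 2
        rw [show K * t = K * (((2:ℕ):ℝ) * t ^ (2 - 1)) / 2 by
          rw [show (2:ℕ) - 1 = 1 from rfl, pow_one]; push_cast; ring]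
        exact this
      exact (ha.const_add (g 0)).add hb
    exact h1.sub (hd t ht)
  have hmono : MonotoneOn h (Set.Icc (0:ℝ) 1) := by
    apply monotoneOn_of_deriv_nonneg (convex_Icc 0 1)
    · exact fun t ht => (hh t ht).continuousAt.continuousWithinAt
    · intro t ht
      rw [interior_Icc] at ht
      exact ((hh t ⟨ht.1.le, ht.2.le⟩).differentiableAt).differentiableWithinAt
    · intro t ht
      rw [interior_Icc] at ht
      rw [(hh t ⟨ht.1.le, ht.2.le⟩).deriv]
      have := hlip t ⟨ht.1.le, ht.2.le⟩
      linarith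
  have h01 : h 0 ≤ h 1 :=
    hmono (Set.mem_Icc.mpr ⟨le_refl 0, zero_le_one⟩)
      (Set.mem_Icc.mpr ⟨zero_le_one, le_refl 1⟩) zero_le_one
  simp only [hh_def] at h01
  nlinarith [h01]

/-! ### GLM loss convexity and risk decomposition -/

lemma glm_convex {n d : ℕ} (X : Matrix (Fin n) (Fin d) ℝ) (Y : Fin n → ℝ)
    {A : ℝ → ℝ} (hA : ConvexOn ℝ Set.univ A) :
    ConvexOn ℝ Set.univ (glmObj X Y A) := by
  refine ⟨convex_univ, fun p _ q _ a b ha hb hab => ?_⟩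
  have hM : X.mulVec (a • p + b • q) = a • X.mulVec p + b • X.mulVec q := by
    rw [Matrix.mulVec_add, Matrix.mulVec_smul, Matrix.mulVec_smul]
  have hn0 : (0:ℝ) ≤ 1 / (n:ℝ) := by positivity
  have hAsum : ∑ i, A (a * X.mulVec p i + b * X.mulVec q i)
      ≤ a * ∑ i, A (X.mulVec p i) + b * ∑ i, A (X.mulVec q i) := by
    rw [Finset.mul_sum, Finset.mul_sum, ← Finset.sum_add_distrib]
    refine Finset.sum_le_sum fun i _ => ?_
    simpa using hA.2 (Set.mem_univ (X.mulVec p i)) (Set.mem_univ (X.mulVec q i)) ha hb hab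
  have hlin : ∑ i, Y i * (a * X.mulVec p i + b * X.mulVec q i)
      = a * ∑ i, Y i * X.mulVec p i + b * ∑ i, Y i * X.mulVec q i := by
    rw [Finset.mul_sum, Finset.mul_sum, ← Finset.sum_add_distrib]
    exact Finset.sum_congr rfl fun i _ => by ring
  simp only [glmObj, hM, Pi.add_apply, Pi.smul_apply, smul_eq_mul]
  have hinner : -(∑ i, Y i * (a * X.mulVec p i + b * X.mulVec q i))
        + ∑ i, A (a * X.mulVec p i + b * X.mulVec q i)
      ≤ a * (-(∑ i, Y i * X.mulVec p i) + ∑ i, A (X.mulVec p i))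
        + b * (-(∑ i, Y i * X.mulVec q i) + ∑ i, A (X.mulVec q i)) := by
    rw [hlin]; ring_nf; ring_nf at hAsum; linarith
  calc (1 / (n:ℝ)) * (-(∑ i, Y i * (a * X.mulVec p i + b * X.mulVec q i))
        + ∑ i, A (a * X.mulVec p i + b * X.mulVec q i))
      ≤ (1 / (n:ℝ)) * (a * (-(∑ i, Y i * X.mulVec p i) + ∑ i, A (X.mulVec p i))
        + b * (-(∑ i, Y i * X.mulVec q i) + ∑ i, A (X.mulVec q i))) :=
        mul_le_mul_of_nonneg_left hinner hn0
    _ = a * ((1 / (n:ℝ)) * (-(∑ i, Y i * X.mulVec p i) + ∑ i, A (X.mulVec p i)))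
        + b * ((1 / (n:ℝ)) * (-(∑ i, Y i * X.mulVec q i) + ∑ i, A (X.mulVec q i))) := by
        ring

lemma glm_risk_eq {n d : ℕ} (X : Matrix (Fin n) (Fin d) ℝ) (Y μ : Fin n → ℝ)
    (A : ℝ → ℝ) (w : Fin d → ℝ) :
    glmObj X μ A w = glmObj X Y A w
      + ∑ j, (X.transpose.mulVec (fun i => Y i - μ i) j / n) * w j := by
  have h1 : ∑ j, (X.transpose.mulVec (fun i => Y i - μ i) j / n) * w j
      = (1 / (n:ℝ)) * ∑ i, (Y i - μ i) * X.mulVec w i := by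
    simp only [Matrix.mulVec, dotProduct, Matrix.transpose_apply, div_eq_mul_inv,
      Finset.mul_sum, Finset.sum_mul]
    rw [Finset.sum_comm]
    exact Finset.sum_congr rfl fun i _ => Finset.sum_congr rfl fun j _ => by ring
  have h2 : ∑ i, (Y i - μ i) * X.mulVec w i
      = ∑ i, Y i * X.mulVec w i - ∑ i, μ i * X.mulVec w i := by
    rw [← Finset.sum_sub_distrib]
    exact Finset.sum_congr rfl fun i _ => by ring
  rw [h1, h2]
  simp only [glmObj]
  ring

/-! ### Constraint-set lemmas -/

lemma ball_convex {d : ℕ} (b : ℝ) :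
    Convex ℝ {θ : Fin d → ℝ | Real.sqrt (∑ j, θ j ^ 2) ≤ b} := by
  have hset : {θ : Fin d → ℝ | Real.sqrt (∑ j, θ j ^ 2) ≤ b}
      = ((WithLp.linearEquiv 2 ℝ (Fin d → ℝ)).symm : (Fin d → ℝ) →ₗ[ℝ] EuclideanSpace ℝ (Fin d)) ⁻¹'
        (Metric.closedBall 0 b) := by
    ext θ
    simp only [Set.mem_setOf_eq, Set.mem_preimage, Metric.mem_closedBall, dist_zero_right]
    rw [EuclideanSpace.norm_eq]
    have heq : ∀ i, ‖((WithLp.linearEquiv 2 ℝ (Fin d → ℝ)).symm :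
        (Fin d → ℝ) →ₗ[ℝ] EuclideanSpace ℝ (Fin d)) θ i‖ ^ 2 = θ i ^ 2 := by
      intro i
      rw [Real.norm_eq_abs, sq_abs]
      rfl
    simp only [heq]
  rw [hset]
  exact (convex_closedBall (0 : EuclideanSpace ℝ (Fin d)) b).linear_preimage _

/-- Obtuse angle property of the projection, from the minimality property. -/
lemma proj_obtuse {d : ℕ} {C : Set (Fin d → ℝ)} (hC : Convex ℝ C)
    {p z w : Fin d → ℝ} (hp : p ∈ C) (hw : w ∈ C)
    (hmin : ∀ u ∈ C, Real.sqrt (gnsq (p - z)) ≤ Real.sqrt (gnsq (u - z))) :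
    0 ≤ gdot (p - z) (w - p) := by
  have key : ∀ s ∈ Set.Ioc (0:ℝ) 1, 0 ≤ 2 * gdot (p - z) (w - p) + s * gnsq (w - p) := by
    intro s hs
    have hmem : p + s • (w - p) ∈ C := by
      have h := hC hp hw (by linarith [hs.2] : (0:ℝ) ≤ 1 - s) hs.1.le (by ring)
      convert h using 1
      funext j
      simp only [Pi.add_apply, Pi.smul_apply, Pi.sub_apply, smul_eq_mul]
      ring
    have h1 := hmin _ hmem
    have h2 : gnsq (p - z) ≤ gnsq (p + s • (w - p) - z) := by
      rw [← Real.sqrt_le_sqrt_iff (gnsq_nonneg _)] at *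
      exact h1
    have h3 : p + s • (w - p) - z = (p - z) + s • (w - p) := by
      funext j; simp [Pi.add_apply, Pi.sub_apply]; ring
    rw [h3, gnsq_add_smul] at h2
    have h4 : 0 ≤ s * (2 * gdot (p - z) (w - p) + s * gnsq (w - p)) := by nlinarith
    exact nonneg_of_mul_nonneg_right h4 hs.1
  have htend : Filter.Tendsto (fun s : ℝ => 2 * gdot (p - z) (w - p) + s * gnsq (w - p))
      (nhdsWithin 0 (Set.Ioi 0)) (nhds (2 * gdot (p - z) (w - p))) := by
    have hcont : Continuous (fun s : ℝ => 2 * gdot (p - z) (w - p) + s * gnsq (w - p)) := by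
      continuity
    have h := hcont.tendsto 0
    simp only [zero_mul, add_zero] at h
    exact h.mono_left nhdsWithin_le_nhds
  have hmem : Set.Ioc (0:ℝ) 1 ∈ nhdsWithin (0:ℝ) (Set.Ioi 0) :=
    Ioc_mem_nhdsGT_of_mem (by constructor <;> norm_num)
  have := ge_of_tendsto htend (Filter.eventually_iff_exists_mem.mpr ⟨_, hmem, key⟩)
  linarith
theorem gd_glm_risk_bound {n d : ℕ} (hn : 0 < n)
    (X : Matrix (Fin n) (Fin d) ℝ) (Y μ : Fin n → ℝ)
    (A : ℝ → ℝ) (hA : ConvexOn ℝ Set.univ A)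
    (C : Set (Fin d → ℝ)) (b : ℝ)
    (hC : C = Set.univ ∨ (0 < b ∧ C = {θ | Real.sqrt (∑ j, θ j ^ 2) ≤ b}))
    (hdiff : ∀ θ ∈ C, DifferentiableAt ℝ (glmObj X Y A) θ)
    (L : ℝ) (hL : 0 < L)
    (hsmooth : ∀ x ∈ C, ∀ y ∈ C,
      Real.sqrt (∑ j, (piGrad (glmObj X Y A) x j - piGrad (glmObj X Y A) y j) ^ 2) ≤
        L * Real.sqrt (∑ j, (x j - y j) ^ 2))
    (η : ℝ) (hη : 0 < η ∧ η ≤ 1 / L)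
    (θseq : ℕ → Fin d → ℝ) (hθ0 : θseq 0 = 0)
    (hupd : ∀ t, θseq (t + 1) ∈ C ∧ ∀ w ∈ C,
      Real.sqrt (∑ j, (θseq (t + 1) j -
          (θseq t j - η * piGrad (glmObj X Y A) (θseq t) j)) ^ 2) ≤
        Real.sqrt (∑ j, (w j - (θseq t j - η * piGrad (glmObj X Y A) (θseq t) j)) ^ 2))
    (T : ℕ) (hT : 1 ≤ T) (θ : Fin d → ℝ) (hθ : θ ∈ C) :
    glmObj X μ A (θseq T) ≤ glmObj X μ A θ
      + η * T / 2 * ∑ j, (X.transpose.mulVec (fun i => Y i - μ i) j / n) ^ 2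
      + (1 / (η * T)) / 2 * ∑ j, θ j ^ 2 := by
  obtain ⟨hη1, hη2⟩ := hη
  have hCconv : Convex ℝ C := by
    rcases hC with h | ⟨hb, h⟩
    · rw [h]; exact convex_univ
    · rw [h]; exact ball_convex b
  have h0C : (0 : Fin d → ℝ) ∈ C := by
    rcases hC with h | ⟨hb, h⟩
    · rw [h]; trivial
    · rw [h]
      simp only [Set.mem_setOf_eq, Pi.zero_apply]
      simpa using hb.le
  have hmem : ∀ t, θseq t ∈ C := by
    intro t
    cases t with
    | zero => rw [hθ0]; exact h0C
    | succ t => exact (hupd t).1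
  -- one-step inequality of projected gradient descent
  have onestep : ∀ t, ∀ w ∈ C, glmObj X Y A (θseq (t+1)) ≤ glmObj X Y A w
      + 1/(2*η) * (gnsq (θseq t - w) - gnsq (θseq (t+1) - w)) := by
    intro t w hw
    set x := θseq t with hxdef
    set p := θseq (t+1) with hpdef
    set g : Fin d → ℝ := piGrad (glmObj X Y A) x with hgdef
    have hxC : x ∈ C := hmem t
    have hpC : p ∈ C := (hupd t).1
    have hseg : ∀ v : Fin d → ℝ, v ∈ C → ∀ s ∈ Set.Icc (0:ℝ) 1, x + s • (v - x) ∈ C := by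
      intro v hv s hs
      have h := hCconv hxC hv (by linarith [hs.2] : (0:ℝ) ≤ 1 - s) hs.1 (by ring)
      convert h using 1
      funext j
      simp only [Pi.add_apply, Pi.smul_apply, Pi.sub_apply, smul_eq_mul]
      ring
    -- (a) descent lemma
    have hdescent : glmObj X Y A p ≤ glmObj X Y A x + (∑ j, (p - x) j * g j)
        + (L * gnsq (p - x)) / 2 := by
      have hd : ∀ s ∈ Set.Icc (0:ℝ) 1,
          HasDerivAt (fun s : ℝ => glmObj X Y A (x + s • (p - x)))
            ((fun s : ℝ => ∑ j, (p - x) j * piGrad (glmObj X Y A) (x + s • (p - x)) j) s) s :=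
        fun s hs => hasDerivAt_line (hdiff _ (hseg p hpC s hs))
      have hx0 : x + (0:ℝ) • (p - x) = x := by simp
      have hlip : ∀ s ∈ Set.Icc (0:ℝ) 1,
          (fun s : ℝ => ∑ j, (p - x) j * piGrad (glmObj X Y A) (x + s • (p - x)) j) s
          ≤ (fun s : ℝ => ∑ j, (p - x) j * piGrad (glmObj X Y A) (x + s • (p - x)) j) 0
            + (L * gnsq (p - x)) * s := by
        intro s hs
        simp only
        rw [hx0]
        have hdelta : (∑ j, (p - x) j * piGrad (glmObj X Y A) (x + s • (p - x)) j)
            - (∑ j, (p - x) j * piGrad (glmObj X Y A) x j)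
            = gdot (piGrad (glmObj X Y A) (x + s • (p - x)) - piGrad (glmObj X Y A) x)
                (p - x) := by
          unfold gdot
          rw [← Finset.sum_sub_distrib]
          exact Finset.sum_congr rfl fun j _ => by simp only [Pi.sub_apply]; ring
        have hCS := gdot_le_sqrt
          (piGrad (glmObj X Y A) (x + s • (p - x)) - piGrad (glmObj X Y A) x) (p - x)
        have hsm : Real.sqrt (gnsq (piGrad (glmObj X Y A) (x + s • (p - x))
              - piGrad (glmObj X Y A) x))
            ≤ L * Real.sqrt (gnsq (x + s • (p - x) - x)) :=
          hsmooth _ (hseg p hpC s hs) _ hxC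
        have hnorm : Real.sqrt (gnsq (x + s • (p - x) - x))
            = s * Real.sqrt (gnsq (p - x)) := by
          have h1 : gnsq (x + s • (p - x) - x) = s^2 * gnsq (p - x) := by
            unfold gnsq
            rw [Finset.mul_sum]
            exact Finset.sum_congr rfl fun j _ => by
              simp only [Pi.sub_apply, Pi.add_apply, Pi.smul_apply, smul_eq_mul]; ring
          rw [h1, Real.sqrt_mul (sq_nonneg s), Real.sqrt_sq hs.1]
        have hsq : Real.sqrt (gnsq (p - x)) * Real.sqrt (gnsq (p - x)) = gnsq (p - x) :=
          Real.mul_self_sqrt (gnsq_nonneg _)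
        have hfin : (∑ j, (p - x) j * piGrad (glmObj X Y A) (x + s • (p - x)) j)
            - (∑ j, (p - x) j * piGrad (glmObj X Y A) x j) ≤ L * gnsq (p - x) * s := by
          rw [hdelta]
          calc gdot (piGrad (glmObj X Y A) (x + s • (p - x)) - piGrad (glmObj X Y A) x)
                (p - x)
              ≤ Real.sqrt (gnsq (piGrad (glmObj X Y A) (x + s • (p - x))
                  - piGrad (glmObj X Y A) x)) * Real.sqrt (gnsq (p - x)) := hCS
            _ ≤ (L * (s * Real.sqrt (gnsq (p - x)))) * Real.sqrt (gnsq (p - x)) := by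
                apply mul_le_mul_of_nonneg_right _ (Real.sqrt_nonneg _)
                rw [← hnorm]; exact hsm
            _ = L * (Real.sqrt (gnsq (p - x)) * Real.sqrt (gnsq (p - x))) * s := by ring
            _ = L * gnsq (p - x) * s := by rw [hsq]
        linarith
      have hds := descent_scalar hd hlip
      simp only [one_smul, zero_smul, add_zero] at hds
      have hP : x + (p - x) = p := by funext j; simp
      rw [hP] at hds
      exact hds
    -- (b) convexity lower bound
    have hconv : glmObj X Y A x + (∑ j, (w - x) j * g j) ≤ glmObj X Y A w := by
      have hline := convexOn_comp_line (glm_convex X Y hA) x (w - x)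
      have hx0 : x + (0:ℝ) • (w - x) = x := by simp
      have hd0 : HasDerivAt (fun s : ℝ => glmObj X Y A (x + s • (w - x)))
          (∑ j, (w - x) j * piGrad (glmObj X Y A) (x + (0:ℝ) • (w - x)) j) 0 :=
        hasDerivAt_line (by rw [hx0]; exact hdiff _ hxC)
      have hcc := convex_deriv_le hline hd0
      simp only [one_smul, zero_smul, add_zero] at hcc
      have hW : x + (w - x) = w := by funext j; simp
      rw [hW] at hcc
      exact hcc
    -- (c) projection obtuse angle
    set z : Fin d → ℝ := x - η • g with hzdef
    have hproj : 0 ≤ gdot (p - z) (w - p) := by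
      apply proj_obtuse hCconv hpC hw
      intro u hu
      exact (hupd t).2 u hu
    -- combine
    have hkey : η * ((∑ j, (p - x) j * g j) - ∑ j, (w - x) j * g j)
        = gdot (x - p) (p - w) + gdot (p - z) (p - w) := by
      unfold gdot
      rw [mul_sub, Finset.mul_sum, Finset.mul_sum, ← Finset.sum_sub_distrib,
        ← Finset.sum_add_distrib]
      refine Finset.sum_congr rfl fun j _ => ?_
      simp only [hzdef, Pi.sub_apply, Pi.smul_apply, smul_eq_mul]
      ring
    have hsign : gdot (p - z) (p - w) = - gdot (p - z) (w - p) := by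
      unfold gdot
      rw [← Finset.sum_neg_distrib]
      exact Finset.sum_congr rfl fun j _ => by simp only [Pi.sub_apply]; ring
    have hpolar := gdot_polar x p w
    have hLη : L ≤ 1/η := by
      rw [le_div_iff₀ hη1]
      calc L * η ≤ L * (1/L) := mul_le_mul_of_nonneg_left hη2 hL.le
        _ = 1 := by field_simp
    have h5 : η * ((∑ j, (p - x) j * g j) - ∑ j, (w - x) j * g j)
        ≤ (gnsq (x - w) - gnsq (x - p) - gnsq (p - w))/2 := by
      rw [hkey, hpolar]
      have : gdot (p - z) (p - w) ≤ 0 := by rw [hsign]; linarith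
      linarith
    have h6 : (∑ j, (p - x) j * g j) - (∑ j, (w - x) j * g j)
        ≤ ((gnsq (x - w) - gnsq (x - p) - gnsq (p - w))/2) / η := by
      rw [le_div_iff₀ hη1]
      linarith
    have hcomm : gnsq (p - x) = gnsq (x - p) := gnsq_sub_comm p x
    have hq : L * gnsq (x - p) ≤ (1/η) * gnsq (x - p) :=
      mul_le_mul_of_nonneg_right hLη (gnsq_nonneg _)
    have hηne : η ≠ 0 := ne_of_gt hη1
    have hrw : ((gnsq (x - w) - gnsq (x - p) - gnsq (p - w))/2) / η
        = 1/(2*η) * (gnsq (x - w) - gnsq (p - w)) - 1/(2*η) * gnsq (x - p) := by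
      field_simp
      ring
    have hrw2 : (1/η) * gnsq (x - p) / 2 = 1/(2*η) * gnsq (x - p) := by
      field_simp
    rw [hrw] at h6
    -- hdescent + hconv + h6
    have := hdescent
    rw [hcomm] at this
    have hLgn : (L * gnsq (x - p)) / 2 ≤ 1/(2*η) * gnsq (x - p) := by
      rw [← hrw2]
      linarith
    linarith
  -- per-step descent
  have hdec : ∀ t, glmObj X Y A (θseq (t+1)) ≤ glmObj X Y A (θseq t) := by
    intro t
    have h := onestep t (θseq t) (hmem t)
    have h0 : gnsq (θseq t - θseq t) = 0 := by simp [gnsq]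
    have h1 : 0 ≤ gnsq (θseq (t+1) - θseq t) := gnsq_nonneg _
    have hpos : (0:ℝ) < 1/(2*η) := by positivity
    nlinarith [h, h0, h1, hpos]
  have hanti : Antitone (fun t => glmObj X Y A (θseq t)) :=
    antitone_nat_of_succ_le hdec
  have hTpos : (0:ℝ) < T := by
    have : 0 < T := hT
    exact_mod_cast this
  have hsum1 : (T:ℝ) * glmObj X Y A (θseq T)
      ≤ ∑ t ∈ Finset.range T, glmObj X Y A (θseq (t+1)) := by
    have := Finset.card_nsmul_le_sum (Finset.range T)
      (fun t => glmObj X Y A (θseq (t+1))) (glmObj X Y A (θseq T))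
      (fun t ht => hanti (Finset.mem_range.mp ht))
    simpa [Finset.card_range, nsmul_eq_mul] using this
  have hsum2 : ∑ t ∈ Finset.range T, glmObj X Y A (θseq (t+1))
      ≤ (T:ℝ) * glmObj X Y A θ
        + 1/(2*η) * (gnsq (θseq 0 - θ) - gnsq (θseq T - θ)) := by
    calc ∑ t ∈ Finset.range T, glmObj X Y A (θseq (t+1))
        ≤ ∑ t ∈ Finset.range T, (glmObj X Y A θ
            + 1/(2*η) * (gnsq (θseq t - θ) - gnsq (θseq (t+1) - θ))) :=
          Finset.sum_le_sum fun t _ => onestep t θ hθ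
      _ = (T:ℝ) * glmObj X Y A θ + 1/(2*η) * ∑ t ∈ Finset.range T,
            (gnsq (θseq t - θ) - gnsq (θseq (t+1) - θ)) := by
          rw [Finset.sum_add_distrib, Finset.sum_const, Finset.card_range, ← Finset.mul_sum]
          simp [nsmul_eq_mul]
      _ = _ := by rw [Finset.sum_range_sub' (fun t => gnsq (θseq t - θ)) T]
  have h0θ : gnsq (θseq 0 - θ) = gnsq θ := by
    rw [hθ0]
    unfold gnsq
    exact Finset.sum_congr rfl fun j _ => by simp only [Pi.sub_apply, Pi.zero_apply]; ring
  rw [h0θ] at hsum2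
  have hell : glmObj X Y A (θseq T) - glmObj X Y A θ
      ≤ (1/(2*η) * (gnsq θ - gnsq (θseq T - θ))) / T := by
    rw [le_div_iff₀ hTpos]
    nlinarith [hsum1, hsum2]
  -- risk decomposition
  have hR : ∀ w : Fin d → ℝ, glmObj X μ A w = glmObj X Y A w
      + gdot (fun j => X.transpose.mulVec (fun i => Y i - μ i) j / n) w := by
    intro w
    exact glm_risk_eq X Y μ A w
  have hamgm := gdot_amgm (show (0:ℝ) < η * T by positivity)
    (fun j => X.transpose.mulVec (fun i => Y i - μ i) j / n) (θseq T - θ)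
  have hgsub : gdot (fun j => X.transpose.mulVec (fun i => Y i - μ i) j / n) (θseq T - θ)
      = gdot (fun j => X.transpose.mulVec (fun i => Y i - μ i) j / n) (θseq T)
        - gdot (fun j => X.transpose.mulVec (fun i => Y i - μ i) j / n) θ := by
    unfold gdot
    rw [← Finset.sum_sub_distrib]
    exact Finset.sum_congr rfl fun j _ => by simp only [Pi.sub_apply]; ring
  have hgv : (∑ j, (X.transpose.mulVec (fun i => Y i - μ i) j / n) ^ 2)
      = gnsq (fun j => X.transpose.mulVec (fun i => Y i - μ i) j / n) := rfl
  have hgθ : (∑ j, θ j ^ 2) = gnsq θ := rfl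
  rw [hR (θseq T), hR θ, hgv, hgθ]
  have he1 : (1/(2*η) * (gnsq θ - gnsq (θseq T - θ))) / T
      = (1 / (η * T)) / 2 * gnsq θ - (1 / (η * T)) / 2 * gnsq (θseq T - θ) := by
    field_simp
    try ring
    try exact Or.inl trivial
  rw [he1] at hell
  have he2 : (η * (T:ℝ)) / 2 * gnsq (fun j => X.transpose.mulVec (fun i => Y i - μ i) j / n)
      + 1 / (2 * (η * T)) * gnsq (θseq T - θ)
      = η * T / 2 * gnsq (fun j => X.transpose.mulVec (fun i => Y i - μ i) j / n)
      + (1 / (η * T)) / 2 * gnsq (θseq T - θ) := by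
    ring
  rw [he2] at hamgm
  linarith [hamgm, hell, hgsub]
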